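/- Let (·,·): V × V → ℚ be a bilinear pairing on a 𝕂-vector space V satisfying (Jλ,μ) = -(λ,Jμ) for all λ,μ. Then ⟨λ,μ⟩ := (λ,μ)/2 - √(-d)·(Jλ,μ)/(2d) defines a Hermitian pairing V × V → 𝕂 whose trace Tr^𝕂_ℚ ∘ ⟨·,·⟩ equals (·,·), and also ⟨λ,μ⟩ = (λ,μ)/2 + √(-d)·(λ,Jμ)/(2d). -/

import Mathlib

/-- Let `(·,·) : V × V → ℚ` be a bilinear pairing on a `𝕂`-vector space `V`
(`𝕂 = ℚ(√(-d))` acting via `J`, `J² = -d·Id`) satisfying `(Jλ,μ) = -(λ,Jμ)`.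
Then `⟨λ,μ⟩ := (λ,μ)/2 - √(-d)·(Jλ,μ)/(2d)` defines a Hermitian pairing
`V × V → 𝕂` whose trace equals `(·,·)`, and moreover
`⟨λ,μ⟩ = (λ,μ)/2 + √(-d)·(λ,Jμ)/(2d)`.  The Hermitian pairing is encoded by its
two rational-bilinear components `p`, `q` (`⟨λ,μ⟩ = p(λ,μ) + q(λ,μ)·√(-d)`,
trace `= 2p`), with 𝕂-(conjugate-)linearity expressed by the four identities. -/
theorem hermitian_from_skew_pairing
    (V : Type*) [AddCommGroup V] [Module ℚ V]
    (d : ℕ) (hd : 0 < d) (J : V →ₗ[ℚ] V)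
    (hJ : J ∘ₗ J = -(d : ℚ) • LinearMap.id)
    (B : LinearMap.BilinForm ℚ V)
    (hskew : ∀ l m : V, B (J l) m = - B l (J m)) :
    ∃ p q : LinearMap.BilinForm ℚ V,
      (∀ l m : V, p l m = B l m / 2) ∧
      (∀ l m : V, q l m = -(B (J l) m) / (2 * d)) ∧
      (∀ l m : V, q l m = B l (J m) / (2 * d)) ∧
      (∀ l m : V, p (J l) m = -(d : ℚ) * q l m) ∧
      (∀ l m : V, q (J l) m = p l m) ∧
      (∀ l m : V, p l (J m) = (d : ℚ) * q l m) ∧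
      (∀ l m : V, q l (J m) = - p l m) ∧
      (∀ l m : V, B l m = 2 * p l m) := by
  have hJJ : ∀ l : V, J (J l) = -(d : ℚ) • l := fun l => by
    have := LinearMap.congr_fun hJ l
    simpa using this
  have hd' : (d : ℚ) ≠ 0 := by exact_mod_cast hd.ne'
  refine ⟨(2:ℚ)⁻¹ • B, (-(2*d : ℚ)⁻¹) • (B.compl₁₂ J LinearMap.id), ?_, ?_, ?_, ?_, ?_, ?_, ?_, ?_⟩
  · intro l m; simp [div_eq_inv_mul]
  · intro l m; simp [LinearMap.compl₁₂_apply]; field_simp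
  · intro l m
    simp only [LinearMap.smul_apply, LinearMap.compl₁₂_apply, LinearMap.id_coe, id_eq,
      smul_eq_mul, hskew l m]
    field_simp
  · intro l m
    simp only [LinearMap.smul_apply, LinearMap.compl₁₂_apply, LinearMap.id_coe, id_eq,
      smul_eq_mul]
    field_simp
  · intro l m
    simp only [LinearMap.smul_apply, LinearMap.compl₁₂_apply, LinearMap.id_coe, id_eq,
      smul_eq_mul, hJJ l]
    simp
    field_simp
  · intro l m
    simp only [LinearMap.smul_apply, LinearMap.compl₁₂_apply, LinearMap.id_coe, id_eq,
      smul_eq_mul, hskew l m]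
    field_simp
  · intro l m
    simp only [LinearMap.smul_apply, LinearMap.compl₁₂_apply, LinearMap.id_coe, id_eq,
      smul_eq_mul, hskew l (J m), hJJ m]
    simp
    field_simp
  · intro l m; simp
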